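/- Let Φ̃ = (φ̃^{(0)}, φ̃^{(1)}, …) be a stationary sequence of random variables in [0,∞) with finite-dimensional distribution functions F̃^{[d]} (with F̃^{[0]} := 1). If for every d ≥ 0 and all t_0, …, t_d ≥ 0 one has F̃^{[d+1]}(t_0, t_1, …, t_d) = (1−θ) F̃^{[d]}(t_1, …, t_d) + θ ∫₀^{t_0} [F̃^{[d]}(t_1,…,t_d) − F̃^{[d+1]}(s, t_1, …, t_d)] ds, where θ ∈ (0,1], then Φ̃ is an iid sequence with each φ̃^{(j)} distributed according to F̃_{(Exp,θ)}(t) = (1−θ) + θ(1 − e^{−θt}). -/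

import Mathlib

open MeasureTheory ProbabilityTheory Filter Topology Set

lemma ode_unique {G : ℝ → ℝ} (hmono : Monotone G) {θ : ℝ} (C A : ℝ)
    (h : ∀ t, 0 ≤ t → G t = A + θ * ∫ s in (0:ℝ)..t, (C - G s)) :
    ∀ t, 0 ≤ t → G t = C + (A - C) * Real.exp (-θ * t) := by
  have hint : ∀ a b : ℝ, IntervalIntegrable G MeasureTheory.volume a b :=
    fun a b => hmono.intervalIntegrable
  set H : ℝ → ℝ := fun t => ∫ s in (0:ℝ)..t, G s with hH
  have hHcont : Continuous H := intervalIntegral.continuous_primitive hint 0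
  set g : ℝ → ℝ := fun t => A + θ * (C * t - H t) with hg
  have hgcont : Continuous g := by fun_prop
  have hGg : ∀ t, 0 ≤ t → G t = g t := by
    intro t ht
    rw [h t ht]
    have : (∫ s in (0:ℝ)..t, (C - G s)) = C * t - H t := by
      rw [intervalIntegral.integral_sub intervalIntegrable_const (hint 0 t),
        intervalIntegral.integral_const]
      simp [hH, smul_eq_mul, mul_comm]
    rw [this]
  set f : ℝ → ℝ := fun t => Real.exp (θ * t) * (g t - C) with hf
  have hfderiv : ∀ x, 0 ≤ x → HasDerivWithinAt f 0 (Ici x) x := by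
    intro x hx
    have hGc : ContinuousWithinAt G (Ici x) x := by
      refine (hgcont.continuousWithinAt).congr (fun y hy => hGg y (le_trans hx hy)) (hGg x hx)
    have hHd : HasDerivWithinAt H (G x) (Ici x) x :=
      intervalIntegral.integral_hasDerivWithinAt_right (hint 0 x)
        (hmono.measurable.stronglyMeasurable.stronglyMeasurableAtFilter)
        (hGc.mono Ioi_subset_Ici_self)
    have hgd : HasDerivWithinAt g (θ * (C - G x)) (Ici x) x := by
      have h1 : HasDerivWithinAt (fun t : ℝ => C * t - H t) (C - G x) (Ici x) x := by
        have h1' := ((hasDerivWithinAt_id x (Ici x)).const_mul C).sub hHd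
        simp only [mul_one] at h1'
        exact h1'
      simpa [hg] using (h1.const_mul θ).const_add A
    have hexp : HasDerivWithinAt (fun t : ℝ => Real.exp (θ * t))
        (Real.exp (θ * x) * θ) (Ici x) x := by
      simpa using (((hasDerivWithinAt_id x (Ici x)).const_mul θ).exp)
    have := hexp.mul (hgd.sub_const C)
    refine this.congr_deriv ?_
    rw [← hGg x hx]
    ring
  have hfcont : Continuous f := by fun_prop
  intro t ht
  have hconst : f t = f 0 :=
    constant_of_has_deriv_right_zero (hfcont.continuousOn)
      (fun x hx => hfderiv x hx.1) t ⟨ht, le_refl t⟩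
  have hH0 : H 0 = 0 := intervalIntegral.integral_same
  have hf0 : f 0 = A - C := by simp [hf, hg, hH0]
  rw [hGg t ht]
  have hexpne : Real.exp (θ * t) ≠ 0 := Real.exp_ne_zero _
  have h2 : Real.exp (θ * t) * (g t - C) = A - C := by rw [← hf0]; exact hconst
  have h3 : g t - C = (A - C) / Real.exp (θ * t) := by
    rw [eq_div_iff hexpne]; linarith [h2]
  have h4 : Real.exp (-θ * t) = (Real.exp (θ * t))⁻¹ := by
    rw [neg_mul, Real.exp_neg]
  rw [div_eq_mul_inv] at h3
  rw [h4]
  linarith [h3]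

theorem stmt8 {Ω : Type*} [MeasurableSpace Ω] (μ : Measure Ω) [IsProbabilityMeasure μ]
    (θ : ℝ) (hθ : θ ∈ Set.Ioc (0 : ℝ) 1)
    (Φ : ℕ → Ω → ℝ) (hmeas : ∀ j, Measurable (Φ j)) (hnn : ∀ j ω, 0 ≤ Φ j ω)
    (hstat : ∀ (k d : ℕ) (t : Fin d → ℝ),
      μ {ω | ∀ i : Fin d, Φ (k + i.val) ω ≤ t i} = μ {ω | ∀ i : Fin d, Φ i.val ω ≤ t i})
    (heq : ∀ (d : ℕ) (t0 : ℝ) (t : Fin d → ℝ), 0 ≤ t0 → (∀ i, 0 ≤ t i) →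
      (μ {ω | Φ 0 ω ≤ t0 ∧ ∀ i : Fin d, Φ (i.val + 1) ω ≤ t i}).toReal
        = (1 - θ) * (μ {ω | ∀ i : Fin d, Φ i.val ω ≤ t i}).toReal
          + θ * ∫ s in (0 : ℝ)..t0,
              ((μ {ω | ∀ i : Fin d, Φ i.val ω ≤ t i}).toReal
                - (μ {ω | Φ 0 ω ≤ s ∧ ∀ i : Fin d, Φ (i.val + 1) ω ≤ t i}).toReal)) :
    (∀ (j : ℕ) (t : ℝ), 0 ≤ t →
        (μ {ω | Φ j ω ≤ t}).toReal = (1 - θ) + θ * (1 - Real.exp (-θ * t))) ∧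
      iIndepFun Φ μ := by
  classical
  set F : ℝ → ℝ := fun t => 1 - θ * Real.exp (-θ * t) with hF
  -- Step A: consecutive products
  have key : ∀ (d : ℕ) (t : Fin d → ℝ), (∀ i, 0 ≤ t i) →
      (μ {ω | ∀ i : Fin d, Φ i.val ω ≤ t i}).toReal = ∏ i, F (t i) := by
    intro d
    induction d with
    | zero =>
      intro t _
      simp
    | succ d ih =>
      intro t ht
      set t' : Fin d → ℝ := fun i => t i.succ with ht'
      have hC := ih t' (fun i => ht i.succ)
      set G : ℝ → ℝ :=
        fun s => (μ {ω | Φ 0 ω ≤ s ∧ ∀ i : Fin d, Φ (i.val + 1) ω ≤ t' i}).toReal with hG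
      set C : ℝ := (μ {ω | ∀ i : Fin d, Φ i.val ω ≤ t' i}).toReal with hCdef
      have hmonoG : Monotone G := by
        intro a b hab
        exact ENNReal.toReal_mono (measure_ne_top μ _)
          (measure_mono (fun ω hω => ⟨le_trans hω.1 hab, hω.2⟩))
      have hode := ode_unique hmonoG C ((1 - θ) * C)
        (fun s hs => heq d s t' hs (fun i => ht i.succ))
      have hval := hode (t 0) (ht 0)
      have hset : {ω | ∀ i : Fin (d + 1), Φ i.val ω ≤ t i}
          = {ω | Φ 0 ω ≤ t 0 ∧ ∀ i : Fin d, Φ (i.val + 1) ω ≤ t' i} := by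
        ext ω
        simp only [mem_setOf_eq]
        constructor
        · intro h
          exact ⟨h 0, fun i => h i.succ⟩
        · rintro ⟨h0, h⟩ i
          refine Fin.cases h0 (fun j => h j) i
      calc (μ {ω | ∀ i : Fin (d + 1), Φ i.val ω ≤ t i}).toReal
          = G (t 0) := by rw [hset]
        _ = C + ((1 - θ) * C - C) * Real.exp (-θ * t 0) := hval
        _ = F (t 0) * C := by rw [hF]; ring
        _ = ∏ i, F (t i) := by rw [hC, Fin.prod_univ_succ]
  -- Step B: marginals
  have hmarg : ∀ (j : ℕ) (t : ℝ), 0 ≤ t → (μ {ω | Φ j ω ≤ t}).toReal = F t := by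
    intro j t htt
    have hs := hstat j 1 (fun _ => t)
    have h1 : {ω | ∀ i : Fin 1, Φ (j + i.val) ω ≤ t} = {ω | Φ j ω ≤ t} := by
      ext ω; simp [Fin.forall_fin_one]
    have hk := key 1 (fun _ => t) (fun _ => htt)
    rw [h1] at hs
    rw [hs, hk]
    simp
  have hFnn : ∀ t : ℝ, 0 ≤ t → F t = (1 - θ) + θ * (1 - Real.exp (-θ * t)) := by
    intro t _; rw [hF]; ring
  refine ⟨fun j t htt => by rw [hmarg j t htt, hFnn t htt], ?_⟩
  -- Step D: product over arbitrary finsets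
  have hprod : ∀ (S : Finset ℕ) (t : ℕ → ℝ),
      μ (⋂ i ∈ S, {ω | Φ i ω ≤ t i}) = ∏ i ∈ S, μ {ω | Φ i ω ≤ t i} := by
    intro S t
    by_cases hneg : ∃ i ∈ S, t i < 0
    · obtain ⟨i0, hi0S, hi0⟩ := hneg
      have hempty : {ω | Φ i0 ω ≤ t i0} = (∅ : Set Ω) := by
        ext ω
        simp only [mem_setOf_eq, mem_empty_iff_false, iff_false, not_le]
        exact lt_of_lt_of_le hi0 (hnn i0 ω)
      have hz : μ {ω | Φ i0 ω ≤ t i0} = 0 := by rw [hempty]; simp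
      rw [Finset.prod_eq_zero hi0S hz]
      refine measure_mono_null ?_ hz
      exact biInter_subset_of_mem hi0S
    · push_neg at hneg
      set N : ℕ := S.sup id + 1 with hN
      have hSN : ∀ i ∈ S, i < N := fun i hi =>
        Nat.lt_succ_of_le (Finset.le_sup (f := id) hi)
      set u : ℕ → Fin N → ℝ := fun n i => if i.val ∈ S then t i.val else (n : ℝ) with hu
      set A : ℕ → Set Ω := fun n => {ω | ∀ i : Fin N, Φ i.val ω ≤ u n i} with hA
      have hmonoA : Monotone A := by
        intro a b hab ω hω i
        refine le_trans (hω i) ?_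
        rw [hu]
        by_cases h : i.val ∈ S <;> simp [h, Nat.cast_le.mpr hab]
      have hunion : (⋃ n, A n) = ⋂ i ∈ S, {ω | Φ i ω ≤ t i} := by
        ext ω
        simp only [mem_iUnion, mem_iInter, mem_setOf_eq, hA]
        constructor
        · rintro ⟨n, hn⟩ i hi
          have := hn ⟨i, hSN i hi⟩
          simpa [hu, hi] using this
        · intro h
          set M : ℕ := Finset.univ.sup (fun i : Fin N => ⌈Φ i.val ω⌉₊) with hM
          refine ⟨M, fun i => ?_⟩
          rw [hu]
          by_cases hiS : i.val ∈ S
          · simp only [hiS, if_true]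
            exact h i.val hiS
          · simp only [hiS, if_false]
            calc Φ i.val ω ≤ (⌈Φ i.val ω⌉₊ : ℝ) := Nat.le_ceil _
              _ ≤ (M : ℝ) := Nat.cast_le.mpr
                  (Finset.le_sup (f := fun i : Fin N => ⌈Φ i.val ω⌉₊) (Finset.mem_univ i))
      have hlim1 : Tendsto (fun n => (μ (A n)).toReal) atTop
          (𝓝 ((μ (⋂ i ∈ S, {ω | Φ i ω ≤ t i})).toReal)) := by
        rw [← hunion]
        exact (ENNReal.tendsto_toReal (measure_ne_top μ _)).comp
          (tendsto_measure_iUnion_atTop hmonoA)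
      have hAval : ∀ n : ℕ, (μ (A n)).toReal = ∏ i : Fin N, F (u n i) := by
        intro n
        refine key N (u n) (fun i => ?_)
        rw [hu]
        by_cases h : i.val ∈ S
        · simp only [h, if_true]; exact hneg i.val h
        · simp [h]
      have hexp0 : Tendsto (fun n : ℕ => Real.exp (-θ * n)) atTop (𝓝 0) := by
        exact Real.tendsto_exp_atBot.comp
          ((tendsto_const_mul_atBot_of_neg (neg_lt_zero.mpr hθ.1)).mpr
            tendsto_natCast_atTop_atTop)
      have hlim2 : Tendsto (fun n => ∏ i : Fin N, F (u n i)) atTop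
          (𝓝 (∏ i : Fin N, if i.val ∈ S then F (t i.val) else 1)) := by
        refine tendsto_finset_prod _ (fun i _ => ?_)
        by_cases h : i.val ∈ S
        · simp only [hu, h, if_true]
          exact tendsto_const_nhds
        · simp only [hu, h, if_false]
          have : Tendsto (fun n : ℕ => F (n : ℝ)) atTop (𝓝 1) := by
            rw [hF]
            have := (tendsto_const_nhds (x := (1:ℝ))).sub
              ((tendsto_const_nhds (x := θ)).mul hexp0)
            simpa using this
          exact this
      have hprodS : (∏ i : Fin N, if i.val ∈ S then F (t i.val) else 1)
          = ∏ i ∈ S, F (t i) := by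
        rw [Fin.prod_univ_eq_prod_range (fun i => if i ∈ S then F (t i) else 1) N]
        rw [Finset.prod_ite_mem (Finset.range N) S (fun i => F (t i))]
        congr 1
        rw [Finset.inter_comm]
        exact Finset.inter_eq_left.mpr (fun i hi => Finset.mem_range.mpr (hSN i hi))
      have hreal : (μ (⋂ i ∈ S, {ω | Φ i ω ≤ t i})).toReal = ∏ i ∈ S, F (t i) := by
        have := tendsto_nhds_unique hlim1 (by simpa only [hAval, hprodS] using hlim2)
        exact this
      have hrhs : ∀ i ∈ S, μ {ω | Φ i ω ≤ t i} = ENNReal.ofReal (F (t i)) := by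
        intro i hi
        rw [← hmarg i (t i) (hneg i hi)]
        exact (ENNReal.ofReal_toReal (measure_ne_top μ _)).symm
      rw [Finset.prod_congr rfl hrhs]
      rw [← ENNReal.ofReal_prod_of_nonneg, ← hreal,
        ENNReal.ofReal_toReal (measure_ne_top μ _)]
      intro i hi
      rw [← hmarg i (t i) (hneg i hi)]
      exact ENNReal.toReal_nonneg
  -- Step E: independence
  rw [iIndepFun_iff_iIndep]
  refine iIndepSets.iIndep (fun i => (hmeas i).comap_le)
    (fun i => (preimage (Φ i)) '' (range Iic)) (fun i => isPiSystem_Iic.comap (Φ i))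
    (fun i => ?_) ?_
  · show MeasurableSpace.comap (Φ i) (inferInstance : MeasurableSpace ℝ)
      = MeasurableSpace.generateFrom ((preimage (Φ i)) '' (range Iic))
    have hb : (inferInstance : MeasurableSpace ℝ)
        = MeasurableSpace.generateFrom (range Iic) := borel_eq_generateFrom_Iic ℝ
    rw [hb, MeasurableSpace.comap_generateFrom]
  · rw [iIndepSets_iff]
    intro S f hf
    have hex : ∀ i ∈ S, ∃ r : ℝ, f i = {ω | Φ i ω ≤ r} := by
      intro i hi
      obtain ⟨s, ⟨r, rfl⟩, hfi⟩ := hf i hi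
      exact ⟨r, hfi.symm⟩
    choose! r hr using hex
    have h1 : (⋂ i ∈ S, f i) = ⋂ i ∈ S, {ω | Φ i ω ≤ r i} :=
      iInter₂_congr hr
    rw [h1, Finset.prod_congr rfl (fun i hi => by rw [hr i hi])]
    exact hprod S r
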